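/- arXiv:2407.13573 — 5 statements merged into one kernel-verified Lean document; each statement's English description precedes it below -/
import Mathlib

section
/- For all real numbers x and y, the R₀-conjunction x ∧₀ y := x + y − √(x² + y²) satisfies: x ∧₀ y ≥ 0 if and only if x ≥ 0 and y ≥ 0. -/
theorem stmt_1 (x y : ℝ) :
    x + y - Real.sqrt (x^2 + y^2) ≥ 0 ↔ x ≥ 0 ∧ y ≥ 0 := by
  have hx : |x| ≤ Real.sqrt (x^2 + y^2) := by
    rw [← Real.sqrt_sq_eq_abs]
    exact Real.sqrt_le_sqrt (by nlinarith [sq_nonneg y])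
  have hy : |y| ≤ Real.sqrt (x^2 + y^2) := by
    rw [← Real.sqrt_sq_eq_abs]
    exact Real.sqrt_le_sqrt (by nlinarith [sq_nonneg x])
  constructor
  · intro h
    constructor
    · nlinarith [abs_nonneg y, le_abs_self y]
    · nlinarith [abs_nonneg x, le_abs_self x]
  · rintro ⟨hx0, hy0⟩
    have : Real.sqrt (x^2 + y^2) ≤ x + y := by
      rw [show x^2 + y^2 = (x+y)^2 - 2*x*y by ring]
      calc Real.sqrt ((x+y)^2 - 2*x*y) ≤ Real.sqrt ((x+y)^2) :=
            Real.sqrt_le_sqrt (by nlinarith)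
        _ = x + y := by rw [Real.sqrt_sq (by linarith)]
    linarith
end

section
/- For all real numbers x and y, the R₀-disjunction x ∨₀ y := x + y + √(x² + y²) satisfies: x ∨₀ y ≥ 0 if and only if x ≥ 0 or y ≥ 0. -/
theorem stmt_2 (x y : ℝ) :
    x + y + Real.sqrt (x^2 + y^2) ≥ 0 ↔ x ≥ 0 ∨ y ≥ 0 := by
  constructor
  · intro h
    by_contra hc
    push_neg at hc
    obtain ⟨hx, hy⟩ := hc
    have hs : Real.sqrt (x^2 + y^2) < -x + -y :=
      (Real.sqrt_lt' (by linarith)).mpr (by nlinarith)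
    linarith
  · intro h
    have hsq : Real.sqrt (x^2 + y^2) ≥ Real.sqrt (x^2) := by
      apply Real.sqrt_le_sqrt; nlinarith
    have hsq' : Real.sqrt (x^2 + y^2) ≥ Real.sqrt (y^2) := by
      apply Real.sqrt_le_sqrt; nlinarith
    rw [Real.sqrt_sq_eq_abs] at hsq hsq'
    rcases h with h | h
    · have : |y| ≥ -y := neg_le_abs y
      linarith
    · have : |x| ≥ -x := neg_le_abs x
      linarith
end

section
/- Let α be a real number with −1 < α ≤ 1. Then for all real x, y, the quantity x² + y² − 2αxy is nonnegative, so the Rα-conjunction x ∧α y = (1/(1+α))·(x + y − √(x² + y² − 2αxy)) is well-defined, and x ∧α y ≥ 0 if and only if x ≥ 0 and y ≥ 0. -/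
theorem stmt_3 (α : ℝ) (hα : -1 < α) (hα' : α ≤ 1) (x y : ℝ) :
    0 ≤ x^2 + y^2 - 2*α*x*y ∧
    ((1/(1+α)) * (x + y - Real.sqrt (x^2 + y^2 - 2*α*x*y)) ≥ 0 ↔ x ≥ 0 ∧ y ≥ 0) := by
  have h0 : 0 ≤ x^2 + y^2 - 2*α*x*y := by
    nlinarith [sq_nonneg (x-y), sq_nonneg (x+y)]
  refine ⟨h0, ?_⟩
  have hpos : 0 < 1 + α := by linarith
  set S := Real.sqrt (x^2 + y^2 - 2*α*x*y) with hS
  have hSnn : 0 ≤ S := Real.sqrt_nonneg _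
  have hSsq : S^2 = x^2 + y^2 - 2*α*x*y := Real.sq_sqrt h0
  constructor
  · intro h
    have hxy : 0 ≤ x + y - S := by
      by_contra hc
      push_neg at hc
      have : (1/(1+α)) * (x + y - S) < 0 :=
        mul_neg_of_pos_of_neg (by positivity) hc
      linarith
    have hsum : 0 ≤ x + y := by linarith
    have hle : S^2 ≤ (x+y)^2 := by nlinarith
    have hxyprod : 0 ≤ x*y := by nlinarith
    constructor <;> nlinarith [sq_nonneg (x-y), sq_nonneg (x+y)]
  · rintro ⟨hx, hy⟩
    have hprod : 0 ≤ x*y := mul_nonneg hx hy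
    have hle : S ≤ x + y := by
      have h1 : S^2 ≤ (x+y)^2 := by nlinarith
      nlinarith
    have h2 : 0 ≤ x + y - S := by linarith
    exact mul_nonneg (by positivity) h2
end

section
/- Let α be a real number with −1 < α ≤ 1. Then for all real x, y, the Rα-disjunction x ∨α y = (1/(1+α))·(x + y + √(x² + y² − 2αxy)) satisfies x ∨α y ≥ 0 if and only if x ≥ 0 or y ≥ 0. -/
theorem stmt_4 (α : ℝ) (hα : -1 < α) (hα' : α ≤ 1) (x y : ℝ) :
    (1/(1+α)) * (x + y + Real.sqrt (x^2 + y^2 - 2*α*x*y)) ≥ 0 ↔ x ≥ 0 ∨ y ≥ 0 := by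
  have h1 : 0 < 1 + α := by linarith
  have hS : 0 ≤ x^2 + y^2 - 2*α*x*y := by nlinarith [sq_nonneg (x+y), sq_nonneg (x-y)]
  have hinv : 0 < 1/(1+α) := by positivity
  constructor
  · intro h
    by_contra hc
    push_neg at hc
    obtain ⟨hx, hy⟩ := hc
    have hb : 0 < -(x+y) := by linarith
    have hlt : Real.sqrt (x^2 + y^2 - 2*α*x*y) < -(x+y) := by
      rw [show -(x+y) = Real.sqrt ((x+y)^2) by rw [Real.sqrt_sq_eq_abs]; rw [abs_of_nonpos (by linarith)]]
      apply Real.sqrt_lt_sqrt hS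
      nlinarith [mul_pos h1 (mul_pos_of_neg_of_neg hx hy)]
    have : (1/(1+α)) * (x + y + Real.sqrt (x^2 + y^2 - 2*α*x*y)) < 0 := by
      apply mul_neg_of_pos_of_neg hinv; linarith
    linarith
  · intro h
    apply le_of_lt at hinv
    rcases le_or_gt 0 (x+y) with hxy | hxy
    · have := Real.sqrt_nonneg (x^2 + y^2 - 2*α*x*y)
      positivity
    · have hxyneg : x * y ≤ 0 := by
        rcases h with h | h
        · nlinarith
        · nlinarith
      have hge : -(x+y) ≤ Real.sqrt (x^2 + y^2 - 2*α*x*y) := by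
        rw [show -(x+y) = Real.sqrt ((x+y)^2) by rw [Real.sqrt_sq_eq_abs]; rw [abs_of_nonpos (by linarith)]]
        apply Real.sqrt_le_sqrt
        nlinarith [mul_nonpos_of_nonneg_of_nonpos h1.le hxyneg]
      have : 0 ≤ x + y + Real.sqrt (x^2 + y^2 - 2*α*x*y) := by linarith
      positivity
end

section
/- Let φ₁, φ₂ : E → ℝ be functions on a set E, and define D₁ = {p : φ₁(p) ≥ 0}, D₂ = {p : φ₂(p) ≥ 0}. Then D₁ ∩ D₂ = {p ∈ E : φ₁(p) + φ₂(p) − √(φ₁(p)² + φ₂(p)²) ≥ 0} and D₁ ∪ D₂ = {p ∈ E : φ₁(p) + φ₂(p) + √(φ₁(p)² + φ₂(p)²) ≥ 0}. -/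
private lemma sqrt_ge_abs_left (u v : ℝ) : |u| ≤ Real.sqrt (u^2 + v^2) := by
  rw [← Real.sqrt_sq_eq_abs]
  exact Real.sqrt_le_sqrt (by nlinarith [sq_nonneg v])

private lemma key_and (u v : ℝ) : (0 ≤ u ∧ 0 ≤ v) ↔ 0 ≤ u + v - Real.sqrt (u^2 + v^2) := by
  constructor
  · rintro ⟨hu, hv⟩
    have h : Real.sqrt (u^2 + v^2) ≤ u + v := by
      rw [show u + v = Real.sqrt ((u+v)^2) by
        rw [Real.sqrt_sq (by linarith)]]
      exact Real.sqrt_le_sqrt (by nlinarith)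
    linarith
  · intro h
    have h1 := sqrt_ge_abs_left u v
    have h2 := sqrt_ge_abs_left v u
    rw [show v^2 + u^2 = u^2 + v^2 by ring] at h2
    constructor
    · cases abs_cases v with
      | inl hv => linarith [hv.1 ▸ h2]
      | inr hv => nlinarith [abs_nonneg v, le_abs_self v]
    · cases abs_cases u with
      | inl hu => nlinarith [le_abs_self u]
      | inr hu => nlinarith [le_abs_self u]

private lemma key_or (u v : ℝ) : (0 ≤ u ∨ 0 ≤ v) ↔ 0 ≤ u + v + Real.sqrt (u^2 + v^2) := by
  have h1 := sqrt_ge_abs_left u v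
  have h2 := sqrt_ge_abs_left v u
  rw [show v^2 + u^2 = u^2 + v^2 by ring] at h2
  constructor
  · rintro (hu | hv)
    · nlinarith [neg_abs_le v, le_abs_self v]
    · nlinarith [neg_abs_le u]
  · intro h
    by_contra hc
    push_neg at hc
    obtain ⟨hu, hv⟩ := hc
    have hlt : Real.sqrt (u^2 + v^2) < -(u + v) := by
      rw [show -(u+v) = Real.sqrt ((u+v)^2) by
        rw [Real.sqrt_sq_eq_abs, abs_of_neg (by linarith)]]
      exact Real.sqrt_lt_sqrt (by positivity) (by nlinarith)
    linarith

theorem stmt_11 {E : Type*} (φ₁ φ₂ : E → ℝ) :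
    {p : E | φ₁ p ≥ 0} ∩ {p : E | φ₂ p ≥ 0} =
      {p : E | φ₁ p + φ₂ p - Real.sqrt ((φ₁ p)^2 + (φ₂ p)^2) ≥ 0} ∧
    {p : E | φ₁ p ≥ 0} ∪ {p : E | φ₂ p ≥ 0} =
      {p : E | φ₁ p + φ₂ p + Real.sqrt ((φ₁ p)^2 + (φ₂ p)^2) ≥ 0} := by
  constructor
  · ext p
    simpa [Set.mem_inter_iff, ge_iff_le] using key_and (φ₁ p) (φ₂ p)
  · ext p
    simpa [Set.mem_union, ge_iff_le] using key_or (φ₁ p) (φ₂ p)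
end
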